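/- (Main theorem, complete allocation, egalitarian welfare p = −∞.) For every ε with 0 < ε < 1/2 there exists a complete allocation X = (X_1,…,X_n) of M that is (1/2 − ε)-EFX and satisfies, for every allocation X* = (X*_1,…,X*_n) of pairwise disjoint subsets of M, min_i v_i(X_i) ≥ ( (1 − 2ε)/(8(n+1)) ) · min_i v_i(X*_i). -/

import Mathlib

set_option maxHeartbeats 1000000

open Finset

namespace EFXProof

variable {G : Type*} [DecidableEq G]

/-- subadditivity over a finite union -/
lemma subadd_biUnion (v : Finset G → ℝ) (hnorm : v ∅ = 0)
    (hsub : ∀ A B : Finset G, v (A ∪ B) ≤ v A + v B)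
    {ι : Type*} [DecidableEq ι] (s : Finset ι) (F : ι → Finset G) :
    v (s.biUnion F) ≤ ∑ k ∈ s, v (F k) := by
  classical
  induction s using Finset.induction_on with
  | empty => simp [hnorm]
  | insert a s' h ih =>
      rw [Finset.biUnion_insert, Finset.sum_insert h]
      exact le_trans (hsub _ _) (by linarith)

/-- The context for the core construction.  `t` is the per-agent floor;
`Z` is a benchmark family of disjoint bundles with `v i (Z i) ≥ (2n+1)t`. -/
structure Ctx (G : Type*) [DecidableEq G] where
  n : ℕ
  hn : 0 < n
  M : Finset G
  v : Fin n → Finset G → ℝ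
  hv0 : ∀ i A, 0 ≤ v i A
  hnorm : ∀ i, v i ∅ = 0
  hmono : ∀ i A B, A ⊆ B → v i A ≤ v i B
  hsub : ∀ i A B, v i (A ∪ B) ≤ v i A + v i B
  δ : ℝ
  hδ : 0 < δ
  t : ℝ
  ht0 : 0 ≤ t
  Z : Fin n → Finset G
  hZM : ∀ i, Z i ⊆ M
  hZdisj : ∀ i j, i ≠ j → Disjoint (Z i) (Z j)
  hZval : ∀ i, (2*(n:ℝ)+1) * t ≤ v i (Z i)

variable (C : Ctx G)

/-- the finite set of all achievable values, plus 1 -/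
noncomputable def Vset : Finset ℝ :=
  insert 1 (((univ : Finset (Fin C.n)) ×ˢ C.M.powerset).image (fun p => C.v p.1 p.2))

lemma mem_Vset {i : Fin C.n} {S : Finset G} (hS : S ⊆ C.M) : C.v i S ∈ Vset C := by
  apply Finset.mem_insert_of_mem
  exact Finset.mem_image.2 ⟨(i, S), by simp [Finset.mem_product, Finset.mem_powerset, hS], rfl⟩

noncomputable def Vmax : ℝ := (Vset C).max' ⟨1, Finset.mem_insert_self _ _⟩

lemma le_Vmax {i : Fin C.n} {S : Finset G} (hS : S ⊆ C.M) : C.v i S ≤ Vmax C :=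
  Finset.le_max' _ _ (mem_Vset C hS)

noncomputable def Dmin : ℝ := ((Vset C).filter (fun x => 0 < x)).min'
  ⟨1, Finset.mem_filter.2 ⟨Finset.mem_insert_self _ _, one_pos⟩⟩

lemma Dmin_pos : 0 < Dmin C := by
  have := Finset.min'_mem ((Vset C).filter (fun x => 0 < x))
    ⟨1, Finset.mem_filter.2 ⟨Finset.mem_insert_self _ _, one_pos⟩⟩
  exact (Finset.mem_filter.1 this).2

lemma Dmin_le {i : Fin C.n} {S : Finset G} (hS : S ⊆ C.M) (h : C.v i S ≠ 0) :
    Dmin C ≤ C.v i S := by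
  apply Finset.min'_le
  exact Finset.mem_filter.2 ⟨mem_Vset C hS, lt_of_le_of_ne (C.hv0 i S) (Ne.symm h)⟩

noncomputable def K : ℕ := ⌈Vmax C / (Dmin C * C.δ)⌉₊ + 1

lemma K_big : Vmax C < Dmin C * (1 + C.δ) ^ (K C) := by
  have hΔ := Dmin_pos C
  have hδ := C.hδ
  have hbern : 1 + (K C : ℝ) * C.δ ≤ (1 + C.δ) ^ (K C) :=
    one_add_mul_le_pow (by linarith) (K C)
  have hK : Vmax C / (Dmin C * C.δ) ≤ ((K C : ℕ) : ℝ) := by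
    have := Nat.le_ceil (Vmax C / (Dmin C * C.δ))
    have : (⌈Vmax C / (Dmin C * C.δ)⌉₊ : ℝ) ≤ (K C : ℝ) := by
      have : (⌈Vmax C / (Dmin C * C.δ)⌉₊ : ℕ) ≤ K C := Nat.le_succ _
      exact_mod_cast this
    linarith [Nat.le_ceil (Vmax C / (Dmin C * C.δ))]
  have h1 : Vmax C ≤ (K C : ℝ) * (Dmin C * C.δ) :=
    (div_le_iff₀ (by positivity)).1 hK
  calc Vmax C ≤ (K C : ℝ) * (Dmin C * C.δ) := h1
    _ < Dmin C * (1 + (K C : ℝ) * C.δ) := by nlinarith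
    _ ≤ Dmin C * (1 + C.δ) ^ (K C) := by nlinarith

/-- the level function -/
noncomputable def lev (x : ℝ) : ℕ :=
  ((Finset.range (K C + 1)).filter (fun k => Dmin C * (1 + C.δ) ^ k ≤ x)).card

lemma lev_le : ∀ x, lev C x ≤ K C + 1 := by
  intro x
  calc lev C x ≤ (Finset.range (K C + 1)).card := Finset.card_filter_le _ _
    _ = K C + 1 := Finset.card_range _

lemma lev_mono {x y : ℝ} (h : x ≤ y) : lev C x ≤ lev C y := by
  apply Finset.card_le_card
  intro k hk
  rw [Finset.mem_filter] at *
  exact ⟨hk.1, le_trans hk.2 h⟩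

lemma lev_zero_of_nonpos {x : ℝ} (hx : x ≤ 0) : lev C x = 0 := by
  unfold lev
  rw [Finset.card_eq_zero, Finset.filter_eq_empty_iff]
  intro k _
  have : (0:ℝ) < Dmin C * (1 + C.δ) ^ k := by
    have := Dmin_pos C; have := C.hδ; positivity
  push_neg
  linarith

/-- key level-increase lemma -/
lemma lev_up {x y : ℝ} (hx0 : 0 ≤ x) (hxD : x ≠ 0 → Dmin C ≤ x) (hxV : x ≤ Vmax C)
    (hyD : Dmin C ≤ y) (h : (1 + C.δ) * x < y) : lev C x < lev C y := by
  have hΔ := Dmin_pos C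
  have hδ := C.hδ
  by_cases hx : x = 0
  · subst hx
    rw [lev_zero_of_nonpos C le_rfl]
    have : 0 ∈ (Finset.range (K C + 1)).filter (fun k => Dmin C * (1 + C.δ) ^ k ≤ y) := by
      rw [Finset.mem_filter, Finset.mem_range]
      constructor
      · omega
      · simpa using hyD
    have : 0 < lev C y := Finset.card_pos.2 ⟨0, this⟩
    omega
  · -- shift argument
    have hxD' := hxD hx
    have hcard : (((Finset.range (K C + 1)).filter
        (fun k => Dmin C * (1 + C.δ) ^ k ≤ x)).image (fun k => k + 1)) ∪ {0} ⊆
        (Finset.range (K C + 1)).filter (fun k => Dmin C * (1 + C.δ) ^ k ≤ y) := by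
      intro k hk
      rw [Finset.mem_union, Finset.mem_image] at hk
      rcases hk with ⟨k', hk', rfl⟩ | hk0
      · rw [Finset.mem_filter, Finset.mem_range] at hk' ⊢
        obtain ⟨hk'r, hk'le⟩ := hk'
        constructor
        · -- k' < K C since D(1+δ)^k' ≤ x ≤ Vmax < D(1+δ)^K
          have hlt : Dmin C * (1 + C.δ) ^ k' < Dmin C * (1 + C.δ) ^ (K C) :=
            lt_of_le_of_lt (le_trans hk'le hxV) (K_big C)
          have : (1 + C.δ) ^ k' < (1 + C.δ) ^ (K C) := by
            have := (mul_lt_mul_iff_right₀ hΔ).1 hlt; linarith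
          have : k' < K C := by
            by_contra hcon
            push_neg at hcon
            have := pow_le_pow_right₀ (by linarith : (1:ℝ) ≤ 1 + C.δ) hcon
            linarith
          omega
        · have : Dmin C * (1 + C.δ) ^ (k' + 1) = (1 + C.δ) * (Dmin C * (1 + C.δ) ^ k') := by ring
          rw [this]
          calc (1 + C.δ) * (Dmin C * (1 + C.δ) ^ k') ≤ (1 + C.δ) * x := by nlinarith
            _ ≤ y := le_of_lt h
      · simp at hk0
        subst hk0
        rw [Finset.mem_filter, Finset.mem_range]
        exact ⟨by omega, by simpa using hyD⟩
    have hdisj : Disjoint (((Finset.range (K C + 1)).filter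
        (fun k => Dmin C * (1 + C.δ) ^ k ≤ x)).image (fun k => k + 1)) ({0} : Finset ℕ) := by
      rw [Finset.disjoint_singleton_right, Finset.mem_image]
      rintro ⟨k, _, hk⟩
      simp at hk
    have hinj : Set.InjOn (fun k => k + 1)
        ((Finset.range (K C + 1)).filter (fun k => Dmin C * (1 + C.δ) ^ k ≤ x)) := by
      intro a _ b _ hab
      simp only [] at hab
      omega
    unfold lev
    calc ((Finset.range (K C + 1)).filter (fun k => Dmin C * (1 + C.δ) ^ k ≤ x)).card
        < ((Finset.range (K C + 1)).filter (fun k => Dmin C * (1 + C.δ) ^ k ≤ x)).card + 1 :=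
          Nat.lt_succ_self _
      _ = (((Finset.range (K C + 1)).filter
            (fun k => Dmin C * (1 + C.δ) ^ k ≤ x)).image (fun k => k + 1)).card + 1 := by
          rw [Finset.card_image_of_injOn hinj]
      _ = ((((Finset.range (K C + 1)).filter
            (fun k => Dmin C * (1 + C.δ) ^ k ≤ x)).image (fun k => k + 1)) ∪ {0}).card := by
          rw [Finset.card_union_of_disjoint hdisj]; simp
      _ ≤ ((Finset.range (K C + 1)).filter (fun k => Dmin C * (1 + C.δ) ^ k ≤ y)).card :=
          Finset.card_le_card hcard



/-! ## State machine -/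

structure St (C : Ctx G) where
  A : Finset (Fin C.n)
  X : Fin C.n → Finset G
  P : Finset G
  B : Finset G

variable {C}

def tot (s : St C) : Finset G := (univ.biUnion s.X) ∪ s.P ∪ s.B

lemma mem_tot {s : St C} {g : G} :
    g ∈ tot s ↔ (∃ i, g ∈ s.X i) ∨ g ∈ s.P ∨ g ∈ s.B := by
  unfold tot
  simp [Finset.mem_union, Finset.mem_biUnion, or_assoc]

structure Inv (s : St C) : Prop where
  j0 : ∀ i, i ∉ s.A → s.X i = ∅
  jd : ∀ i j, i ≠ j → Disjoint (s.X i) (s.X j)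
  jxp : ∀ i, Disjoint (s.X i) s.P
  jxb : ∀ i, Disjoint (s.X i) s.B
  jpb : Disjoint s.P s.B
  jcov : tot s = C.M
  j2 : ∀ i ∈ s.A, C.t ≤ C.v i (s.X i)
  j3 : ∀ i ∈ s.A, ∀ j ∈ s.A, i ≠ j →
        (s.X j).card = 1 ∨ C.v i (s.X j) ≤ (2+2*C.δ) * C.v i (s.X i)
  j4 : ∀ u, u ∉ s.A → ∀ k ∈ s.A, C.v u (C.Z u ∩ s.X k) ≤ 2*C.t
  j4' : ∀ u, u ∉ s.A → ∀ k ∈ s.A, (s.X k).card = 1 ∨ C.v u (s.X k) ≤ 2*C.t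
  j6 : ∀ j ∈ s.A, C.v j s.B ≤ (1+C.δ) * C.v j (s.X j)
  j7 : ∀ u, u ∉ s.A → s.B = ∅ ∨ C.v u s.B < C.t

lemma X_subset_M {s : St C} (hs : Inv s) (i : Fin C.n) : s.X i ⊆ C.M := by
  intro g hg
  rw [← hs.jcov, mem_tot]
  exact Or.inl ⟨i, hg⟩

lemma P_subset_M {s : St C} (hs : Inv s) : s.P ⊆ C.M := by
  intro g hg; rw [← hs.jcov, mem_tot]; exact Or.inr (Or.inl hg)

lemma B_subset_M {s : St C} (hs : Inv s) : s.B ⊆ C.M := by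
  intro g hg; rw [← hs.jcov, mem_tot]; exact Or.inr (Or.inr hg)

/-! ## Measure -/

noncomputable def sumlev (s : St C) : ℕ := ∑ i, lev C (C.v i (s.X i))

lemma sumlev_le (s : St C) : sumlev s ≤ C.n * (K C + 1) := by
  unfold sumlev
  calc ∑ i, lev C (C.v i (s.X i)) ≤ ∑ _i : Fin C.n, (K C + 1) :=
        Finset.sum_le_sum (fun i _ => lev_le C _)
    _ = C.n * (K C + 1) := by simp [Finset.sum_const, mul_comm]

noncomputable def meas (s : St C) : ℕ :=
  (C.n - s.A.card) * ((C.n * (K C + 1) + 1) * (C.M.card + 1))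
    + (C.n * (K C + 1) - sumlev s) * (C.M.card + 1) + s.P.card

lemma Acard_le (s : St C) : s.A.card ≤ C.n := by
  calc s.A.card ≤ (univ : Finset (Fin C.n)).card := Finset.card_le_card (Finset.subset_univ _)
    _ = C.n := by simp

private lemma lex3 {a a' b b' c c' B D : ℕ} (hb : b ≤ B) (hb' : b' ≤ B)
    (hc : c ≤ D) (hc' : c' ≤ D)
    (h : a' < a ∨ (a' = a ∧ b' < b) ∨ (a' = a ∧ b' = b ∧ c' < c)) :
    a' * ((B + 1) * (D + 1)) + b' * (D + 1) + c' <
      a * ((B + 1) * (D + 1)) + b * (D + 1) + c := by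
  rcases h with h1 | ⟨h2a, h2b⟩ | ⟨h3a, h3b, h3c⟩
  · have key : a' * ((B + 1) * (D + 1)) + b' * (D + 1) + c' <
        (a' + 1) * ((B + 1) * (D + 1)) := by
      have hb'' : b' * (D + 1) ≤ B * (D + 1) := Nat.mul_le_mul_right _ hb'
      have : (a' + 1) * ((B + 1) * (D + 1)) =
          a' * ((B + 1) * (D + 1)) + B * (D + 1) + D + 1 := by ring
      omega
    have : (a' + 1) * ((B + 1) * (D + 1)) ≤ a * ((B + 1) * (D + 1)) :=
      Nat.mul_le_mul_right _ h1
    omega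
  · subst h2a
    have key : b' * (D + 1) + c' < (b' + 1) * (D + 1) := by
      have : (b' + 1) * (D + 1) = b' * (D + 1) + D + 1 := by ring
      omega
    have : (b' + 1) * (D + 1) ≤ b * (D + 1) := Nat.mul_le_mul_right _ h2b
    omega
  · subst h3a; subst h3b; omega

/-- measure decrease: one more agent assigned, sum of levels not decreased -/
lemma meas_lt_assign {s s' : St C} (hs : Inv s) (hs' : Inv s')
    (hA : s.A.card < s'.A.card) (hsum : sumlev s ≤ sumlev s') : meas s' < meas s := by
  unfold meas
  refine lex3 (B := C.n * (K C + 1)) (D := C.M.card) (Nat.sub_le _ _) (Nat.sub_le _ _)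
    (Finset.card_le_card (P_subset_M hs)) (Finset.card_le_card (P_subset_M hs')) ?_
  left
  have := Acard_le s'
  omega

/-- measure decrease: same assigned, sum of levels increased -/
lemma meas_lt_levup {s s' : St C} (hs : Inv s) (hs' : Inv s')
    (hA : s'.A = s.A) (hsum : sumlev s < sumlev s') : meas s' < meas s := by
  unfold meas
  refine lex3 (B := C.n * (K C + 1)) (D := C.M.card) (Nat.sub_le _ _) (Nat.sub_le _ _)
    (Finset.card_le_card (P_subset_M hs)) (Finset.card_le_card (P_subset_M hs')) ?_
  right; left
  have := sumlev_le s'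
  constructor
  · rw [hA]
  · omega

/-- measure decrease: same assigned, same levels, pool smaller -/
lemma meas_lt_pool {s s' : St C} (hs : Inv s) (hs' : Inv s') (hA : s'.A = s.A)
    (hsum : sumlev s' = sumlev s) (hP : s'.P.card < s.P.card) : meas s' < meas s := by
  unfold meas
  refine lex3 (B := C.n * (K C + 1)) (D := C.M.card) (Nat.sub_le _ _) (Nat.sub_le _ _)
    (Finset.card_le_card (P_subset_M hs)) (Finset.card_le_card (P_subset_M hs')) ?_
  right; right
  exact ⟨by rw [hA], by rw [hsum], hP⟩



/-! ## Helpers for moves -/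

lemma exists_mem_update {X : Fin C.n → Finset G} {u : Fin C.n} {W : Finset G} {g : G} :
    (∃ i, g ∈ Function.update X u W i) ↔ g ∈ W ∨ (∃ i, i ≠ u ∧ g ∈ X i) := by
  constructor
  · rintro ⟨i, hi⟩
    by_cases hiu : i = u
    · subst hiu; rw [Function.update_self] at hi; exact Or.inl hi
    · rw [Function.update_of_ne hiu] at hi; exact Or.inr ⟨i, hiu, hi⟩
  · rintro (hW | ⟨i, hiu, hi⟩)
    · exact ⟨u, by rw [Function.update_self]; exact hW⟩
    · exact ⟨i, by rw [Function.update_of_ne hiu]; exact hi⟩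

lemma not_mem_X_of_mem_P {s : St C} (hs : Inv s) {h : G} (hh : h ∈ s.P) (i : Fin C.n) :
    h ∉ s.X i := fun hgi => Finset.disjoint_left.1 (hs.jxp i) hgi hh

lemma not_mem_B_of_mem_P {s : St C} (hs : Inv s) {h : G} (hh : h ∈ s.P) : h ∉ s.B :=
  Finset.disjoint_left.1 hs.jpb hh

lemma v_nonneg_bundle (i : Fin C.n) (S : Finset G) : 0 ≤ C.v i S := C.hv0 i S

/-! ## Move: peel -/

lemma move_peel (s : St C) (hs : Inv s) (u : Fin C.n) (h : G) (hu : u ∉ s.A) (hh : h ∈ s.P)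
    (hval : C.t ≤ C.v u {h})
    (hOC : h ∈ C.Z u ∨ ∀ u', u' ∉ s.A → h ∈ C.Z u' → C.v u' {h} < C.t) :
    ∃ s' : St C, Inv s' ∧ meas s' < meas s := by
  classical
  set s' : St C := ⟨insert u s.A, Function.update s.X u {h}, s.P.erase h, s.B⟩ with hs'def
  have hXu : s.X u = ∅ := hs.j0 u hu
  have hhX : ∀ i, h ∉ s.X i := not_mem_X_of_mem_P hs hh
  have hhB : h ∉ s.B := not_mem_B_of_mem_P hs hh
  have hXM : {h} ⊆ C.M := by
    intro g hg; rw [Finset.mem_singleton] at hg; subst hg; exact P_subset_M hs hh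
  have hinv : Inv s' := by
    constructor
    · -- j0
      intro i hi
      have hiu : i ≠ u := fun hc => hi (by rw [hc]; exact Finset.mem_insert_self _ _)
      rw [hs'def]
      simp only [Function.update_of_ne hiu]
      exact hs.j0 i (fun hc => hi (Finset.mem_insert_of_mem hc))
    · -- jd
      intro i j hij
      rw [hs'def]; simp only []
      by_cases hiu : i = u
      · subst hiu
        rw [Function.update_self, Function.update_of_ne (Ne.symm hij)]
        rw [Finset.disjoint_singleton_left]
        exact hhX j
      · rw [Function.update_of_ne hiu]
        by_cases hju : j = u
        · subst hju
          rw [Function.update_self, Finset.disjoint_singleton_right]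
          exact hhX i
        · rw [Function.update_of_ne hju]
          exact hs.jd i j hij
    · -- jxp
      intro i
      rw [hs'def]; simp only []
      by_cases hiu : i = u
      · subst hiu
        rw [Function.update_self, Finset.disjoint_singleton_left]
        simp
      · rw [Function.update_of_ne hiu]
        exact Finset.disjoint_of_subset_right (Finset.erase_subset _ _) (hs.jxp i)
    · -- jxb
      intro i
      rw [hs'def]; simp only []
      by_cases hiu : i = u
      · subst hiu
        rw [Function.update_self, Finset.disjoint_singleton_left]
        exact hhB
      · rw [Function.update_of_ne hiu]; exact hs.jxb i
    · -- jpb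
      exact Finset.disjoint_of_subset_left (Finset.erase_subset _ _) hs.jpb
    · -- jcov
      rw [← hs.jcov]
      ext g
      rw [mem_tot, mem_tot]
      simp only [hs'def, exists_mem_update, Finset.mem_singleton, Finset.mem_erase]
      by_cases hg : g = h
      · subst hg
        constructor
        · intro _; exact Or.inr (Or.inl hh)
        · intro _; exact Or.inl (Or.inl rfl)
      · constructor
        · rintro ((hgh | ⟨i, hiu, hi⟩) | (⟨_, hgP⟩ | hgB))
          · exact absurd hgh hg
          · exact Or.inl ⟨i, hi⟩
          · exact Or.inr (Or.inl hgP)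
          · exact Or.inr (Or.inr hgB)
        · rintro (⟨i, hi⟩ | hgP | hgB)
          · by_cases hiu : i = u
            · subst hiu; rw [hXu] at hi; exact absurd hi (Finset.notMem_empty g)
            · exact Or.inl (Or.inr ⟨i, hiu, hi⟩)
          · exact Or.inr (Or.inl ⟨hg, hgP⟩)
          · exact Or.inr (Or.inr hgB)
    · -- j2
      intro i hi
      rw [hs'def]; simp only []
      by_cases hiu : i = u
      · subst hiu; rw [Function.update_self]; exact hval
      · rw [Function.update_of_ne hiu]
        exact hs.j2 i (Finset.mem_of_mem_insert_of_ne hi hiu)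
    · -- j3
      intro i hi j hj hij
      rw [hs'def]; simp only []
      by_cases hju : j = u
      · subst hju
        rw [Function.update_self]
        left; simp
      · rw [Function.update_of_ne hju]
        have hjA : j ∈ s.A := Finset.mem_of_mem_insert_of_ne hj hju
        by_cases hiu : i = u
        · subst hiu
          rw [Function.update_self]
          rcases hs.j4' i hu j hjA with hcard | hle
          · exact Or.inl hcard
          · right
            have h0 : 0 ≤ C.v i {h} := C.hv0 _ _
            have hδ := C.hδ
            nlinarith [hval, C.ht0]
        · rw [Function.update_of_ne hiu]
          exact hs.j3 i (Finset.mem_of_mem_insert_of_ne hi hiu) j hjA hij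
    · -- j4
      intro u' hu' k hk
      have hu'A : u' ∉ s.A := fun hc => hu' (Finset.mem_insert_of_mem hc)
      have hu'u : u' ≠ u := fun hc => hu' (by rw [hc]; exact Finset.mem_insert_self _ _)
      rw [hs'def]; simp only []
      by_cases hku : k = u
      · subst hku
        rw [Function.update_self]
        by_cases hZ : h ∈ C.Z u'
        · have hlt : C.v u' {h} < C.t := by
            rcases hOC with hZu | hOC'
            · exact absurd hZ (Finset.disjoint_left.1 (C.hZdisj k u' (Ne.symm hu'u)) hZu)
            · exact hOC' u' hu'A hZ
          have hsub : C.Z u' ∩ {h} ⊆ {h} := Finset.inter_subset_right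
          have := C.hmono u' _ _ hsub
          linarith [C.ht0]
        · have : C.Z u' ∩ {h} = ∅ := by
            rw [Finset.eq_empty_iff_forall_notMem]
            intro g hg
            rw [Finset.mem_inter, Finset.mem_singleton] at hg
            exact hZ (hg.2 ▸ hg.1)
          rw [this, C.hnorm]
          linarith [C.ht0]
      · rw [Function.update_of_ne hku]
        exact hs.j4 u' hu'A k (Finset.mem_of_mem_insert_of_ne hk hku)
    · -- j4'
      intro u' hu' k hk
      have hu'A : u' ∉ s.A := fun hc => hu' (Finset.mem_insert_of_mem hc)
      rw [hs'def]; simp only []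
      by_cases hku : k = u
      · subst hku; rw [Function.update_self]; left; simp
      · rw [Function.update_of_ne hku]
        exact hs.j4' u' hu'A k (Finset.mem_of_mem_insert_of_ne hk hku)
    · -- j6
      intro j hj
      rw [hs'def]; simp only []
      by_cases hju : j = u
      · subst hju
        rw [Function.update_self]
        rcases hs.j7 j hu with hB | hB
        · rw [hB, C.hnorm]
          have := C.hv0 j ({h} : Finset G)
          nlinarith [C.hδ]
        · have := C.hδ
          nlinarith [C.hv0 j ({h} : Finset G), hval]
      · rw [Function.update_of_ne hju]
        exact hs.j6 j (Finset.mem_of_mem_insert_of_ne hj hju)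
    · -- j7
      intro u' hu'
      exact hs.j7 u' (fun hc => hu' (Finset.mem_insert_of_mem hc))
  refine ⟨s', hinv, meas_lt_assign hs hinv ?_ ?_⟩
  · rw [hs'def]; simp only []
    rw [Finset.card_insert_of_notMem hu]
    omega
  · unfold sumlev
    apply Finset.sum_le_sum
    intro i _
    rw [hs'def]; simp only []
    by_cases hiu : i = u
    · subst hiu
      rw [Function.update_self, hXu]
      rw [lev_zero_of_nonpos C (le_of_eq (C.hnorm i))]
      omega
    · rw [Function.update_of_ne hiu]



/-! ## Counting lemma -/

lemma counting (s : St C) (hs : Inv s) (u : Fin C.n) (hu : u ∉ s.A) (hP : s.P = ∅) :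
    C.t ≤ C.v u s.B := by
  classical
  have hdecomp : C.Z u ⊆ (univ.biUnion (fun k => C.Z u ∩ s.X k)) ∪ (C.Z u ∩ s.B) := by
    intro g hg
    have hgM : g ∈ C.M := C.hZM u hg
    rw [← hs.jcov, mem_tot] at hgM
    rcases hgM with ⟨i, hi⟩ | hgP | hgB
    · exact Finset.mem_union_left _
        (Finset.mem_biUnion.2 ⟨i, Finset.mem_univ _, Finset.mem_inter.2 ⟨hg, hi⟩⟩)
    · rw [hP] at hgP; exact absurd hgP (Finset.notMem_empty g)
    · exact Finset.mem_union_right _ (Finset.mem_inter.2 ⟨hg, hgB⟩)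
  have h1 : C.v u (C.Z u) ≤
      C.v u ((univ.biUnion fun k => C.Z u ∩ s.X k) ∪ (C.Z u ∩ s.B)) :=
    C.hmono u _ _ hdecomp
  have h2 := C.hsub u (univ.biUnion fun k => C.Z u ∩ s.X k) (C.Z u ∩ s.B)
  have h3 := subadd_biUnion (C.v u) (C.hnorm u) (C.hsub u) univ (fun k => C.Z u ∩ s.X k)
  have h4 : ∑ k, C.v u (C.Z u ∩ s.X k) ≤ (s.A.card : ℝ) * (2*C.t) := by
    have heq : ∑ k, C.v u (C.Z u ∩ s.X k) = ∑ k ∈ s.A, C.v u (C.Z u ∩ s.X k) := by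
      symm
      apply Finset.sum_subset (Finset.subset_univ _)
      intro k _ hk
      rw [hs.j0 k hk, Finset.inter_empty, C.hnorm]
    rw [heq]
    calc ∑ k ∈ s.A, C.v u (C.Z u ∩ s.X k) ≤ ∑ _k ∈ s.A, 2*C.t :=
          Finset.sum_le_sum (fun k hk => hs.j4 u hu k hk)
      _ = (s.A.card : ℝ) * (2*C.t) := by rw [Finset.sum_const, nsmul_eq_mul]
  have hAn : (s.A.card : ℝ) ≤ (C.n : ℝ) := by exact_mod_cast Acard_le s
  have hZv := C.hZval u
  have hmonoB : C.v u (C.Z u ∩ s.B) ≤ C.v u s.B := C.hmono u _ _ Finset.inter_subset_right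
  nlinarith [C.ht0]

/-! ## Move: force-assign (pool empty) -/

lemma move_force (s : St C) (hs : Inv s) (u : Fin C.n) (hu : u ∉ s.A) (hP : s.P = ∅) :
    ∃ s' : St C, Inv s' ∧ meas s' < meas s := by
  classical
  have htB : C.t ≤ C.v u s.B := counting s hs u hu hP
  set s' : St C := ⟨insert u s.A, Function.update s.X u s.B, s.P, ∅⟩ with hs'def
  have hXu : s.X u = ∅ := hs.j0 u hu
  have hinv : Inv s' := by
    constructor
    · intro i hi
      have hiu : i ≠ u := fun hc => hi (by rw [hc]; exact Finset.mem_insert_self _ _)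
      rw [hs'def]; simp only [Function.update_of_ne hiu]
      exact hs.j0 i (fun hc => hi (Finset.mem_insert_of_mem hc))
    · intro i j hij
      rw [hs'def]; simp only []
      by_cases hiu : i = u
      · subst hiu
        rw [Function.update_self, Function.update_of_ne (Ne.symm hij)]
        exact (hs.jxb j).symm
      · rw [Function.update_of_ne hiu]
        by_cases hju : j = u
        · subst hju
          rw [Function.update_self]
          exact hs.jxb i
        · rw [Function.update_of_ne hju]
          exact hs.jd i j hij
    · intro i
      rw [hs'def]; simp only [hP]
      exact Finset.disjoint_empty_right _
    · intro i
      rw [hs'def]; simp only []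
      exact Finset.disjoint_empty_right _
    · rw [hs'def]; simp only []
      exact Finset.disjoint_empty_right _
    · rw [← hs.jcov]
      ext g
      rw [mem_tot, mem_tot]
      simp only [hs'def, exists_mem_update]
      constructor
      · rintro ((hgB | ⟨i, hiu, hi⟩) | hgP | hgB)
        · exact Or.inr (Or.inr hgB)
        · exact Or.inl ⟨i, hi⟩
        · exact Or.inr (Or.inl hgP)
        · exact absurd hgB (Finset.notMem_empty g)
      · rintro (⟨i, hi⟩ | hgP | hgB)
        · by_cases hiu : i = u
          · subst hiu; rw [hXu] at hi; exact absurd hi (Finset.notMem_empty g)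
          · exact Or.inl (Or.inr ⟨i, hiu, hi⟩)
        · exact Or.inr (Or.inl hgP)
        · exact Or.inl (Or.inl hgB)
    · intro i hi
      rw [hs'def]; simp only []
      by_cases hiu : i = u
      · subst hiu; rw [Function.update_self]; exact htB
      · rw [Function.update_of_ne hiu]
        exact hs.j2 i (Finset.mem_of_mem_insert_of_ne hi hiu)
    · intro i hi j hj hij
      rw [hs'def]; simp only []
      by_cases hju : j = u
      · subst hju
        rw [Function.update_self]
        by_cases hiu : i = j
        · exact absurd hiu hij
        · right
          have hiA : i ∈ s.A := Finset.mem_of_mem_insert_of_ne hi hiu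
          have h6 := hs.j6 i hiA
          rw [Function.update_of_ne hiu]
          have := C.hv0 i (s.X i)
          have hδ := C.hδ
          nlinarith
      · rw [Function.update_of_ne hju]
        have hjA : j ∈ s.A := Finset.mem_of_mem_insert_of_ne hj hju
        by_cases hiu : i = u
        · subst hiu
          rw [Function.update_self]
          rcases hs.j4' i hu j hjA with hcard | hle
          · exact Or.inl hcard
          · right
            have h0 := C.hv0 i s.B
            have hδ := C.hδ
            nlinarith [htB, C.ht0]
        · rw [Function.update_of_ne hiu]
          exact hs.j3 i (Finset.mem_of_mem_insert_of_ne hi hiu) j hjA hij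
    · intro u' hu' k hk
      have hu'A : u' ∉ s.A := fun hc => hu' (Finset.mem_insert_of_mem hc)
      rw [hs'def]; simp only []
      by_cases hku : k = u
      · subst hku
        rw [Function.update_self]
        have hsub : C.Z u' ∩ s.B ⊆ s.B := Finset.inter_subset_right
        have hm := C.hmono u' _ _ hsub
        rcases hs.j7 u' hu'A with hB | hB
        · rw [hB] at hm ⊢
          rw [Finset.inter_empty, C.hnorm]
          linarith [C.ht0]
        · linarith [C.ht0]
      · rw [Function.update_of_ne hku]
        exact hs.j4 u' hu'A k (Finset.mem_of_mem_insert_of_ne hk hku)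
    · intro u' hu' k hk
      have hu'A : u' ∉ s.A := fun hc => hu' (Finset.mem_insert_of_mem hc)
      rw [hs'def]; simp only []
      by_cases hku : k = u
      · subst hku
        rw [Function.update_self]
        right
        rcases hs.j7 u' hu'A with hB | hB
        · rw [hB, C.hnorm]; linarith [C.ht0]
        · linarith [C.ht0]
      · rw [Function.update_of_ne hku]
        exact hs.j4' u' hu'A k (Finset.mem_of_mem_insert_of_ne hk hku)
    · intro j hj
      rw [hs'def]; simp only [C.hnorm]
      have := C.hv0 j (Function.update s.X u s.B j)
      have hδ := C.hδ
      nlinarith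
    · intro u' _
      left; rfl
  refine ⟨s', hinv, meas_lt_assign hs hinv ?_ ?_⟩
  · rw [hs'def]; simp only []
    rw [Finset.card_insert_of_notMem hu]
    omega
  · unfold sumlev
    apply Finset.sum_le_sum
    intro i _
    rw [hs'def]; simp only []
    by_cases hiu : i = u
    · subst hiu
      rw [Function.update_self, hXu]
      rw [lev_zero_of_nonpos C (le_of_eq (C.hnorm i))]
      omega
    · rw [Function.update_of_ne hiu]



/-! ## Move: singleton swap -/

lemma move_sswap (s : St C) (hs : Inv s) (j : Fin C.n) (h : G) (hj : j ∈ s.A) (hh : h ∈ s.P)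
    (hNPP : ∀ u, u ∉ s.A → C.v u {h} < C.t)
    (htrig : (1+C.δ) * C.v j (s.X j) < C.v j {h}) :
    ∃ s' : St C, Inv s' ∧ meas s' < meas s := by
  classical
  set s' : St C := ⟨s.A, Function.update s.X j {h}, (s.P.erase h) ∪ s.X j, s.B⟩ with hs'def
  have hhX : ∀ i, h ∉ s.X i := not_mem_X_of_mem_P hs hh
  have hhB : h ∉ s.B := not_mem_B_of_mem_P hs hh
  have hhM : h ∈ C.M := P_subset_M hs hh
  have hδ := C.hδ
  have hXj0 := C.hv0 j (s.X j)
  have hnewold : C.v j (s.X j) ≤ C.v j {h} := by nlinarith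
  have hinv : Inv s' := by
    constructor
    · intro i hi
      have hij : i ≠ j := fun hc => hi (hc ▸ hj)
      rw [hs'def]; simp only [Function.update_of_ne hij]
      exact hs.j0 i hi
    · intro i k hik
      rw [hs'def]; simp only []
      by_cases hij : i = j
      · subst hij
        rw [Function.update_self, Function.update_of_ne (Ne.symm hik),
          Finset.disjoint_singleton_left]
        exact hhX k
      · rw [Function.update_of_ne hij]
        by_cases hkj : k = j
        · subst hkj
          rw [Function.update_self, Finset.disjoint_singleton_right]
          exact hhX i
        · rw [Function.update_of_ne hkj]
          exact hs.jd i k hik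
    · intro i
      rw [hs'def]; simp only []
      by_cases hij : i = j
      · subst hij
        rw [Function.update_self, Finset.disjoint_singleton_left, Finset.mem_union]
        push_neg
        exact ⟨Finset.notMem_erase _ _, hhX i⟩
      · rw [Function.update_of_ne hij, Finset.disjoint_union_right]
        exact ⟨Finset.disjoint_of_subset_right (Finset.erase_subset _ _) (hs.jxp i),
          hs.jd i j hij⟩
    · intro i
      rw [hs'def]; simp only []
      by_cases hij : i = j
      · subst hij
        rw [Function.update_self, Finset.disjoint_singleton_left]
        exact hhB
      · rw [Function.update_of_ne hij]; exact hs.jxb i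
    · rw [hs'def]; simp only [Finset.disjoint_union_left]
      exact ⟨Finset.disjoint_of_subset_left (Finset.erase_subset _ _) hs.jpb, hs.jxb j⟩
    · rw [← hs.jcov]
      ext g
      rw [mem_tot, mem_tot]
      simp only [hs'def, exists_mem_update, Finset.mem_singleton, Finset.mem_union,
        Finset.mem_erase]
      constructor
      · rintro ((rfl | ⟨i, hij, hi⟩) | (⟨_, hgP⟩ | hgXj) | hgB)
        · exact Or.inr (Or.inl hh)
        · exact Or.inl ⟨i, hi⟩
        · exact Or.inr (Or.inl hgP)
        · exact Or.inl ⟨j, hgXj⟩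
        · exact Or.inr (Or.inr hgB)
      · rintro (⟨i, hi⟩ | hgP | hgB)
        · by_cases hij : i = j
          · subst hij; exact Or.inr (Or.inl (Or.inr hi))
          · exact Or.inl (Or.inr ⟨i, hij, hi⟩)
        · by_cases hgh : g = h
          · exact Or.inl (Or.inl hgh)
          · exact Or.inr (Or.inl (Or.inl ⟨hgh, hgP⟩))
        · exact Or.inr (Or.inr hgB)
    · intro i hi
      rw [hs'def]; simp only []
      by_cases hij : i = j
      · subst hij
        rw [Function.update_self]
        exact le_trans (hs.j2 i hi) hnewold
      · rw [Function.update_of_ne hij]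
        exact hs.j2 i hi
    · intro i hi k hk hik
      rw [hs'def]; simp only []
      by_cases hkj : k = j
      · subst hkj
        rw [Function.update_self]
        left; simp
      · rw [Function.update_of_ne hkj]
        by_cases hij : i = j
        · subst hij
          rw [Function.update_self]
          rcases hs.j3 i hi k hk hik with hcard | hle
          · exact Or.inl hcard
          · right
            have := C.hv0 i (s.X k)
            nlinarith
        · rw [Function.update_of_ne hij]
          exact hs.j3 i hi k hk hik
    · intro u hu k hk
      rw [hs'def]; simp only []
      by_cases hkj : k = j
      · subst hkj
        rw [Function.update_self]
        have hsub : C.Z u ∩ {h} ⊆ {h} := Finset.inter_subset_right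
        have := C.hmono u _ _ hsub
        have := hNPP u hu
        linarith [C.ht0]
      · rw [Function.update_of_ne hkj]
        exact hs.j4 u hu k hk
    · intro u hu k hk
      rw [hs'def]; simp only []
      by_cases hkj : k = j
      · subst hkj; rw [Function.update_self]; left; simp
      · rw [Function.update_of_ne hkj]
        exact hs.j4' u hu k hk
    · intro i hi
      rw [hs'def]; simp only []
      by_cases hij : i = j
      · subst hij
        rw [Function.update_self]
        have := hs.j6 i hi
        nlinarith
      · rw [Function.update_of_ne hij]
        exact hs.j6 i hi
    · intro u hu
      exact hs.j7 u hu
  refine ⟨s', hinv, meas_lt_levup hs hinv rfl ?_⟩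
  unfold sumlev
  apply Finset.sum_lt_sum
  · intro i _
    apply lev_mono
    rw [hs'def]; simp only []
    by_cases hij : i = j
    · subst hij; rw [Function.update_self]; exact hnewold
    · rw [Function.update_of_ne hij]
  · refine ⟨j, Finset.mem_univ _, ?_⟩
    rw [hs'def]; simp only [Function.update_self]
    have hy0 : 0 < C.v j {h} := by nlinarith
    apply lev_up C (C.hv0 j (s.X j))
      (fun hne => Dmin_le C (X_subset_M hs j) hne) (le_Vmax C (X_subset_M hs j))
      (Dmin_le C (by intro g hg; rw [Finset.mem_singleton] at hg; exact hg ▸ hhM) (ne_of_gt hy0))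
      htrig

/-! ## Move: bag swap -/

lemma move_bswap (s : St C) (hs : Inv s) (j : Fin C.n) (h : G) (hj : j ∈ s.A) (hh : h ∈ s.P)
    (hNPP : ∀ u, u ∉ s.A → C.v u {h} < C.t)
    (hnosswap : ∀ j' ∈ s.A, C.v j' {h} ≤ (1+C.δ) * C.v j' (s.X j'))
    (htrig : (1+C.δ) * C.v j (s.X j) < C.v j (s.B ∪ {h})) :
    ∃ s' : St C, Inv s' ∧ meas s' < meas s := by
  classical
  set W : Finset G := s.B ∪ {h} with hWdef
  set s' : St C := ⟨s.A, Function.update s.X j W, (s.P.erase h) ∪ s.X j, ∅⟩ with hs'def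
  have hhX : ∀ i, h ∉ s.X i := not_mem_X_of_mem_P hs hh
  have hhB : h ∉ s.B := not_mem_B_of_mem_P hs hh
  have hhM : h ∈ C.M := P_subset_M hs hh
  have hWM : W ⊆ C.M := by
    rw [hWdef]
    intro g hg
    rcases Finset.mem_union.1 hg with hgB | hgh
    · exact B_subset_M hs hgB
    · rw [Finset.mem_singleton] at hgh; exact hgh ▸ hhM
  have hδ := C.hδ
  have hXj0 := C.hv0 j (s.X j)
  have hnewold : C.v j (s.X j) ≤ C.v j W := by nlinarith
  have hWsub : ∀ i, C.v i W ≤ C.v i s.B + C.v i {h} := fun i => C.hsub i s.B {h}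
  have hinv : Inv s' := by
    constructor
    · intro i hi
      have hij : i ≠ j := fun hc => hi (hc ▸ hj)
      rw [hs'def]; simp only [Function.update_of_ne hij]
      exact hs.j0 i hi
    · intro i k hik
      rw [hs'def]; simp only []
      by_cases hij : i = j
      · subst hij
        rw [Function.update_self, Function.update_of_ne (Ne.symm hik), hWdef,
          Finset.disjoint_union_left, Finset.disjoint_singleton_left]
        exact ⟨(hs.jxb k).symm, hhX k⟩
      · rw [Function.update_of_ne hij]
        by_cases hkj : k = j
        · subst hkj
          rw [Function.update_self, hWdef, Finset.disjoint_union_right,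
            Finset.disjoint_singleton_right]
          exact ⟨hs.jxb i, hhX i⟩
        · rw [Function.update_of_ne hkj]
          exact hs.jd i k hik
    · intro i
      rw [hs'def]; simp only []
      by_cases hij : i = j
      · subst hij
        rw [Function.update_self, hWdef, Finset.disjoint_union_left,
          Finset.disjoint_union_right, Finset.disjoint_union_right,
          Finset.disjoint_singleton_left, Finset.disjoint_singleton_left]
        refine ⟨⟨Finset.disjoint_of_subset_right (Finset.erase_subset _ _) hs.jpb.symm,
          (hs.jxb i).symm⟩, ⟨Finset.notMem_erase _ _, hhX i⟩⟩
      · rw [Function.update_of_ne hij, Finset.disjoint_union_right]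
        exact ⟨Finset.disjoint_of_subset_right (Finset.erase_subset _ _) (hs.jxp i),
          hs.jd i j hij⟩
    · intro i
      rw [hs'def]; simp only []
      exact Finset.disjoint_empty_right _
    · rw [hs'def]; simp only []
      exact Finset.disjoint_empty_right _
    · rw [← hs.jcov]
      ext g
      rw [mem_tot, mem_tot]
      simp only [hs'def, exists_mem_update, hWdef, Finset.mem_singleton, Finset.mem_union,
        Finset.mem_erase]
      constructor
      · rintro (((hgB | rfl) | ⟨i, hij, hi⟩) | (⟨_, hgP⟩ | hgXj) | hgB)
        · exact Or.inr (Or.inr hgB)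
        · exact Or.inr (Or.inl hh)
        · exact Or.inl ⟨i, hi⟩
        · exact Or.inr (Or.inl hgP)
        · exact Or.inl ⟨j, hgXj⟩
        · exact absurd hgB (Finset.notMem_empty g)
      · rintro (⟨i, hi⟩ | hgP | hgB)
        · by_cases hij : i = j
          · subst hij; exact Or.inr (Or.inl (Or.inr hi))
          · exact Or.inl (Or.inr ⟨i, hij, hi⟩)
        · by_cases hgh : g = h
          · exact Or.inl (Or.inl (Or.inr hgh))
          · exact Or.inr (Or.inl (Or.inl ⟨hgh, hgP⟩))
        · exact Or.inl (Or.inl (Or.inl hgB))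
    · intro i hi
      rw [hs'def]; simp only []
      by_cases hij : i = j
      · subst hij
        rw [Function.update_self]
        exact le_trans (hs.j2 i hi) hnewold
      · rw [Function.update_of_ne hij]
        exact hs.j2 i hi
    · intro i hi k hk hik
      rw [hs'def]; simp only []
      by_cases hkj : k = j
      · subst hkj
        rw [Function.update_self]
        right
        rw [Function.update_of_ne hik]
        have h6 := hs.j6 i hi
        have h5 := hnosswap i hi
        have := hWsub i
        nlinarith
      · rw [Function.update_of_ne hkj]
        by_cases hij : i = j
        · subst hij
          rw [Function.update_self]
          rcases hs.j3 i hi k hk hik with hcard | hle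
          · exact Or.inl hcard
          · right
            have := C.hv0 i (s.X k)
            nlinarith
        · rw [Function.update_of_ne hij]
          exact hs.j3 i hi k hk hik
    · intro u hu k hk
      rw [hs'def]; simp only []
      by_cases hkj : k = j
      · subst hkj
        rw [Function.update_self]
        have hsub : C.Z u ∩ W ⊆ W := Finset.inter_subset_right
        have hm := C.hmono u _ _ hsub
        have h5 := hNPP u hu
        have := hWsub u
        rcases hs.j7 u hu with hB | hB
        · have hB0 : C.v u s.B = 0 := by rw [hB, C.hnorm]
          linarith [C.ht0]
        · linarith [C.ht0]
      · rw [Function.update_of_ne hkj]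
        exact hs.j4 u hu k hk
    · intro u hu k hk
      rw [hs'def]; simp only []
      by_cases hkj : k = j
      · subst hkj
        rw [Function.update_self]
        right
        have h5 := hNPP u hu
        have := hWsub u
        rcases hs.j7 u hu with hB | hB
        · have hB0 : C.v u s.B = 0 := by rw [hB, C.hnorm]
          linarith [C.ht0]
        · linarith [C.ht0]
      · rw [Function.update_of_ne hkj]
        exact hs.j4' u hu k hk
    · intro i hi
      rw [hs'def]; simp only [C.hnorm]
      have := C.hv0 i (Function.update s.X j W i)
      nlinarith
    · intro u _
      left; rfl
  refine ⟨s', hinv, meas_lt_levup hs hinv rfl ?_⟩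
  unfold sumlev
  apply Finset.sum_lt_sum
  · intro i _
    apply lev_mono
    rw [hs'def]; simp only []
    by_cases hij : i = j
    · subst hij; rw [Function.update_self]; exact hnewold
    · rw [Function.update_of_ne hij]
  · refine ⟨j, Finset.mem_univ _, ?_⟩
    rw [hs'def]; simp only [Function.update_self]
    have hy0 : 0 < C.v j W := by nlinarith
    exact lev_up C (C.hv0 j (s.X j))
      (fun hne => Dmin_le C (X_subset_M hs j) hne) (le_Vmax C (X_subset_M hs j))
      (Dmin_le C hWM (ne_of_gt hy0)) htrig



/-! ## Move: assign bag to an unassigned agent -/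

lemma move_assign (s : St C) (hs : Inv s) (u : Fin C.n) (h : G) (hu : u ∉ s.A) (hh : h ∈ s.P)
    (hNPP : ∀ u', u' ∉ s.A → C.v u' {h} < C.t)
    (hnobswap : ∀ j' ∈ s.A, C.v j' (s.B ∪ {h}) ≤ (1+C.δ) * C.v j' (s.X j'))
    (htrig : C.t ≤ C.v u (s.B ∪ {h})) :
    ∃ s' : St C, Inv s' ∧ meas s' < meas s := by
  classical
  set W : Finset G := s.B ∪ {h} with hWdef
  set s' : St C := ⟨insert u s.A, Function.update s.X u W, s.P.erase h, ∅⟩ with hs'def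
  have hhX : ∀ i, h ∉ s.X i := not_mem_X_of_mem_P hs hh
  have hhB : h ∉ s.B := not_mem_B_of_mem_P hs hh
  have hhM : h ∈ C.M := P_subset_M hs hh
  have hXu : s.X u = ∅ := hs.j0 u hu
  have hδ := C.hδ
  have hWsub : ∀ i, C.v i W ≤ C.v i s.B + C.v i {h} := fun i => C.hsub i s.B {h}
  have hinv : Inv s' := by
    constructor
    · intro i hi
      have hiu : i ≠ u := fun hc => hi (by rw [hc]; exact Finset.mem_insert_self _ _)
      rw [hs'def]; simp only [Function.update_of_ne hiu]
      exact hs.j0 i (fun hc => hi (Finset.mem_insert_of_mem hc))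
    · intro i k hik
      rw [hs'def]; simp only []
      by_cases hiu : i = u
      · subst hiu
        rw [Function.update_self, Function.update_of_ne (Ne.symm hik), hWdef,
          Finset.disjoint_union_left, Finset.disjoint_singleton_left]
        exact ⟨(hs.jxb k).symm, hhX k⟩
      · rw [Function.update_of_ne hiu]
        by_cases hku : k = u
        · subst hku
          rw [Function.update_self, hWdef, Finset.disjoint_union_right,
            Finset.disjoint_singleton_right]
          exact ⟨hs.jxb i, hhX i⟩
        · rw [Function.update_of_ne hku]
          exact hs.jd i k hik
    · intro i
      rw [hs'def]; simp only []
      by_cases hiu : i = u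
      · subst hiu
        rw [Function.update_self, hWdef, Finset.disjoint_union_left,
          Finset.disjoint_singleton_left]
        exact ⟨Finset.disjoint_of_subset_right (Finset.erase_subset _ _) hs.jpb.symm,
          Finset.notMem_erase _ _⟩
      · rw [Function.update_of_ne hiu]
        exact Finset.disjoint_of_subset_right (Finset.erase_subset _ _) (hs.jxp i)
    · intro i
      rw [hs'def]; simp only []
      exact Finset.disjoint_empty_right _
    · rw [hs'def]; simp only []
      exact Finset.disjoint_empty_right _
    · rw [← hs.jcov]
      ext g
      rw [mem_tot, mem_tot]
      simp only [hs'def, exists_mem_update, hWdef, Finset.mem_singleton, Finset.mem_union,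
        Finset.mem_erase]
      constructor
      · rintro (((hgB | rfl) | ⟨i, hiu, hi⟩) | (⟨_, hgP⟩) | hgB)
        · exact Or.inr (Or.inr hgB)
        · exact Or.inr (Or.inl hh)
        · exact Or.inl ⟨i, hi⟩
        · exact Or.inr (Or.inl hgP)
        · exact absurd hgB (Finset.notMem_empty g)
      · rintro (⟨i, hi⟩ | hgP | hgB)
        · by_cases hiu : i = u
          · subst hiu; rw [hXu] at hi; exact absurd hi (Finset.notMem_empty g)
          · exact Or.inl (Or.inr ⟨i, hiu, hi⟩)
        · by_cases hgh : g = h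
          · exact Or.inl (Or.inl (Or.inr hgh))
          · exact Or.inr (Or.inl ⟨hgh, hgP⟩)
        · exact Or.inl (Or.inl (Or.inl hgB))
    · intro i hi
      rw [hs'def]; simp only []
      by_cases hiu : i = u
      · subst hiu; rw [Function.update_self]; exact htrig
      · rw [Function.update_of_ne hiu]
        exact hs.j2 i (Finset.mem_of_mem_insert_of_ne hi hiu)
    · intro i hi k hk hik
      rw [hs'def]; simp only []
      by_cases hku : k = u
      · subst hku
        rw [Function.update_self]
        by_cases hiu : i = k
        · exact absurd hiu hik
        · right
          have hiA : i ∈ s.A := Finset.mem_of_mem_insert_of_ne hi hiu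
          rw [Function.update_of_ne hiu]
          have := hnobswap i hiA
          have := C.hv0 i (s.X i)
          nlinarith
      · rw [Function.update_of_ne hku]
        have hkA : k ∈ s.A := Finset.mem_of_mem_insert_of_ne hk hku
        by_cases hiu : i = u
        · subst hiu
          rw [Function.update_self]
          rcases hs.j4' i hu k hkA with hcard | hle
          · exact Or.inl hcard
          · right
            have := C.hv0 i W
            nlinarith [htrig, C.ht0]
        · rw [Function.update_of_ne hiu]
          exact hs.j3 i (Finset.mem_of_mem_insert_of_ne hi hiu) k hkA hik
    · intro u' hu' k hk
      have hu'A : u' ∉ s.A := fun hc => hu' (Finset.mem_insert_of_mem hc)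
      rw [hs'def]; simp only []
      by_cases hku : k = u
      · subst hku
        rw [Function.update_self]
        have hm := C.hmono u' _ _ (Finset.inter_subset_right (s₁ := C.Z u') (s₂ := W))
        have h5 := hNPP u' hu'A
        have := hWsub u'
        rcases hs.j7 u' hu'A with hB | hB
        · have hB0 : C.v u' s.B = 0 := by rw [hB, C.hnorm]
          linarith [C.ht0]
        · linarith [C.ht0]
      · rw [Function.update_of_ne hku]
        exact hs.j4 u' hu'A k (Finset.mem_of_mem_insert_of_ne hk hku)
    · intro u' hu' k hk
      have hu'A : u' ∉ s.A := fun hc => hu' (Finset.mem_insert_of_mem hc)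
      rw [hs'def]; simp only []
      by_cases hku : k = u
      · subst hku
        rw [Function.update_self]
        right
        have h5 := hNPP u' hu'A
        have := hWsub u'
        rcases hs.j7 u' hu'A with hB | hB
        · have hB0 : C.v u' s.B = 0 := by rw [hB, C.hnorm]
          linarith [C.ht0]
        · linarith [C.ht0]
      · rw [Function.update_of_ne hku]
        exact hs.j4' u' hu'A k (Finset.mem_of_mem_insert_of_ne hk hku)
    · intro i hi
      rw [hs'def]; simp only [C.hnorm]
      have := C.hv0 i (Function.update s.X u W i)
      nlinarith
    · intro u' _
      left; rfl
  refine ⟨s', hinv, meas_lt_assign hs hinv ?_ ?_⟩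
  · rw [hs'def]; simp only []
    rw [Finset.card_insert_of_notMem hu]
    omega
  · unfold sumlev
    apply Finset.sum_le_sum
    intro i _
    rw [hs'def]; simp only []
    by_cases hiu : i = u
    · subst hiu
      rw [Function.update_self, hXu]
      rw [lev_zero_of_nonpos C (le_of_eq (C.hnorm i))]
      omega
    · rw [Function.update_of_ne hiu]

/-! ## Move: add a good to the bag -/

lemma move_add (s : St C) (hs : Inv s) (h : G) (hh : h ∈ s.P)
    (hnobswap : ∀ j' ∈ s.A, C.v j' (s.B ∪ {h}) ≤ (1+C.δ) * C.v j' (s.X j'))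
    (hnoassign : ∀ u, u ∉ s.A → C.v u (s.B ∪ {h}) < C.t) :
    ∃ s' : St C, Inv s' ∧ meas s' < meas s := by
  classical
  set s' : St C := ⟨s.A, s.X, s.P.erase h, s.B ∪ {h}⟩ with hs'def
  have hhX : ∀ i, h ∉ s.X i := not_mem_X_of_mem_P hs hh
  have hinv : Inv s' := by
    constructor
    · exact hs.j0
    · exact hs.jd
    · intro i
      exact Finset.disjoint_of_subset_right (Finset.erase_subset _ _) (hs.jxp i)
    · intro i
      rw [hs'def]; simp only [Finset.disjoint_union_right, Finset.disjoint_singleton_right]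
      exact ⟨hs.jxb i, hhX i⟩
    · rw [hs'def]; simp only [Finset.disjoint_union_right, Finset.disjoint_singleton_right]
      exact ⟨Finset.disjoint_of_subset_left (Finset.erase_subset _ _) hs.jpb,
        Finset.notMem_erase _ _⟩
    · rw [← hs.jcov]
      ext g
      rw [mem_tot, mem_tot]
      simp only [hs'def, Finset.mem_union, Finset.mem_erase, Finset.mem_singleton]
      constructor
      · rintro (hX | ⟨_, hgP⟩ | hgB | rfl)
        · exact Or.inl hX
        · exact Or.inr (Or.inl hgP)
        · exact Or.inr (Or.inr hgB)
        · exact Or.inr (Or.inl hh)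
      · rintro (hX | hgP | hgB)
        · exact Or.inl hX
        · by_cases hgh : g = h
          · exact Or.inr (Or.inr (Or.inr hgh))
          · exact Or.inr (Or.inl ⟨hgh, hgP⟩)
        · exact Or.inr (Or.inr (Or.inl hgB))
    · exact hs.j2
    · exact hs.j3
    · exact hs.j4
    · exact hs.j4'
    · exact hnobswap
    · intro u hu
      right
      exact hnoassign u hu
  refine ⟨s', hinv, meas_lt_pool hs hinv rfl rfl ?_⟩
  rw [hs'def]; simp only []
  exact Finset.card_erase_lt_of_mem hh



/-! ## Move: rotation along an envy cycle -/

lemma move_rotate (s : St C) (hs : Inv s) (hA : s.A = univ)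
    (hnosrc : ∀ k, ∃ i, i ≠ k ∧ (1+2*C.δ) * C.v i (s.X i) < C.v i (s.X k)) :
    ∃ s' : St C, Inv s' ∧ meas s' < meas s := by
  classical
  have hδ := C.hδ
  set f : Fin C.n → Fin C.n := fun k => Classical.choose (hnosrc k) with hfdef
  have hf : ∀ k, f k ≠ k ∧ (1+2*C.δ) * C.v (f k) (s.X (f k)) < C.v (f k) (s.X k) :=
    fun k => Classical.choose_spec (hnosrc k)
  set x₀ : Fin C.n := ⟨0, C.hn⟩ with hx₀
  -- find a periodic point
  have hper : ∃ (y : Fin C.n) (p : ℕ), 0 < p ∧ f^[p] y = y := by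
    have hcard : Fintype.card (Fin C.n) < Fintype.card (Fin (C.n+1)) := by simp
    obtain ⟨a, b, hab, heq⟩ :=
      Fintype.exists_ne_map_eq_of_card_lt (fun s : Fin (C.n+1) => f^[(s : ℕ)] x₀) hcard
    rcases Nat.lt_or_ge (a : ℕ) (b : ℕ) with hlt | hge
    · refine ⟨f^[(a : ℕ)] x₀, (b : ℕ) - (a : ℕ), by omega, ?_⟩
      rw [← Function.iterate_add_apply]
      have : (b : ℕ) - (a : ℕ) + (a : ℕ) = (b : ℕ) := by omega
      rw [this, heq]
    · have hlt : (b : ℕ) < (a : ℕ) := by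
        rcases Nat.lt_or_ge (b : ℕ) (a : ℕ) with h' | h'
        · exact h'
        · exfalso; exact hab (Fin.ext (by omega))
      refine ⟨f^[(b : ℕ)] x₀, (a : ℕ) - (b : ℕ), by omega, ?_⟩
      rw [← Function.iterate_add_apply]
      have : (a : ℕ) - (b : ℕ) + (b : ℕ) = (a : ℕ) := by omega
      rw [this, ← heq]
  obtain ⟨y, p, hp, hyp⟩ := hper
  set O : Finset (Fin C.n) := (Finset.range p).image (fun k => f^[k] y) with hOdef
  have hyO : y ∈ O := by
    rw [hOdef]
    exact Finset.mem_image.2 ⟨0, Finset.mem_range.2 hp, rfl⟩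
  have hfix : ∀ i ∈ O, f^[p] i = i := by
    intro i hi
    rw [hOdef] at hi
    obtain ⟨k, _, rfl⟩ := Finset.mem_image.1 hi
    rw [← Function.iterate_add_apply, Nat.add_comm, Function.iterate_add_apply, hyp]
  set σ : Fin C.n → Fin C.n := fun i => if i ∈ O then f^[p-1] i else i with hσdef
  have hσO : ∀ i ∈ O, σ i ∈ O := by
    intro i hi
    rw [hσdef]
    simp only [hi, if_true]
    rw [hOdef] at hi ⊢
    obtain ⟨k, hk, rfl⟩ := Finset.mem_image.1 hi
    rw [Finset.mem_range] at hk
    by_cases hk0 : k = 0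
    · subst hk0
      exact Finset.mem_image.2 ⟨p-1, Finset.mem_range.2 (by omega), rfl⟩
    · refine Finset.mem_image.2 ⟨k-1, Finset.mem_range.2 (by omega), ?_⟩
      have h1 : f^[p-1] (f^[k] y) = f^[p-1+k] y := (Function.iterate_add_apply f (p-1) k y).symm
      have h2 : p-1+k = (k-1)+p := by omega
      rw [h1, h2, Function.iterate_add_apply, hyp]
  have hfσ : ∀ i ∈ O, f (σ i) = i := by
    intro i hi
    rw [hσdef]
    simp only [hi, if_true]
    have : f (f^[p-1] i) = f^[1 + (p-1)] i := by
      rw [Function.iterate_add_apply, Function.iterate_one]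
    rw [this]
    have h1p : 1 + (p-1) = p := by omega
    rw [h1p]
    exact hfix i hi
  have hσin : ∀ i, i ∈ O ↔ σ i ∈ O := by
    intro i
    constructor
    · exact hσO i
    · intro hσi
      by_contra hi
      rw [hσdef] at hσi
      simp only [if_neg hi] at hσi
      exact hi hσi
  have hσinj : Function.Injective σ := by
    intro a b hab
    by_cases ha : a ∈ O
    · have hb : b ∈ O := by
        rw [hσin b]
        rw [← hab]
        exact hσO a ha
      have ha' := hfσ a ha
      have hb' := hfσ b hb
      rw [hab, hb'] at ha'
      exact ha'.symm
    · by_cases hb : b ∈ O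
      · exfalso
        apply ha
        rw [hσin a, hab]
        exact hσO b hb
      · rw [hσdef] at hab
        simpa [ha, hb] using hab
  have hσsurj : Function.Surjective σ := Finite.surjective_of_injective hσinj
  -- edge property
  have hE : ∀ i ∈ O, (1+2*C.δ) * C.v i (s.X i) < C.v i (s.X (σ i)) := by
    intro i hi
    have := (hf (σ i)).2
    rw [hfσ i hi] at this
    exact this
  have hup : ∀ i, C.v i (s.X i) ≤ C.v i (s.X (σ i)) := by
    intro i
    by_cases hi : i ∈ O
    · have := hE i hi
      have := C.hv0 i (s.X i)
      nlinarith
    · rw [hσdef]; simp only [if_neg hi]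
      exact le_refl _
  set s' : St C := ⟨s.A, fun i => s.X (σ i), s.P, s.B⟩ with hs'def
  have hinv : Inv s' := by
    constructor
    · intro i hi
      rw [hA] at hi
      exact absurd (Finset.mem_univ i) hi
    · intro i k hik
      rw [hs'def]; simp only []
      exact hs.jd (σ i) (σ k) (fun hc => hik (hσinj hc))
    · intro i
      exact hs.jxp (σ i)
    · intro i
      exact hs.jxb (σ i)
    · exact hs.jpb
    · rw [← hs.jcov]
      ext g
      rw [mem_tot, mem_tot]
      simp only [hs'def]
      constructor
      · rintro (⟨i, hi⟩ | hrest)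
        · exact Or.inl ⟨σ i, hi⟩
        · exact Or.inr hrest
      · rintro (⟨i, hi⟩ | hrest)
        · obtain ⟨k, hk⟩ := hσsurj i
          exact Or.inl ⟨k, by rw [hk]; exact hi⟩
        · exact Or.inr hrest
    · intro i hi
      exact le_trans (hs.j2 i hi) (hup i)
    · intro i hi k hk hik
      rw [hs'def]; simp only []
      by_cases hcase : σ k = i
      · right
        rw [hcase]
        have h1 := hup i
        have := C.hv0 i (s.X i)
        have := C.hv0 i (s.X (σ i))
        nlinarith
      · have hkA : σ k ∈ s.A := by rw [hA]; exact Finset.mem_univ _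
        rcases hs.j3 i hi (σ k) hkA (Ne.symm hcase) with hcard | hle
        · exact Or.inl hcard
        · right
          have h1 := hup i
          have := C.hv0 i (s.X (σ k))
          have := C.hv0 i (s.X i)
          nlinarith
    · intro u hu
      rw [hA] at hu
      exact absurd (Finset.mem_univ u) hu
    · intro u hu
      rw [hA] at hu
      exact absurd (Finset.mem_univ u) hu
    · intro j hj
      rw [hs'def]; simp only []
      have h1 := hup j
      have := hs.j6 j hj
      nlinarith
    · intro u hu
      rw [hA] at hu
      exact absurd (Finset.mem_univ u) hu
  refine ⟨s', hinv, meas_lt_levup hs hinv rfl ?_⟩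
  unfold sumlev
  apply Finset.sum_lt_sum
  · intro i _
    exact lev_mono C (hup i)
  · refine ⟨y, Finset.mem_univ _, ?_⟩
    rw [hs'def]; simp only []
    have hEy := hE y hyO
    have hx0 := C.hv0 y (s.X y)
    have htr : (1+C.δ) * C.v y (s.X y) < C.v y (s.X (σ y)) := by nlinarith
    have hy0 : 0 < C.v y (s.X (σ y)) := by nlinarith
    exact lev_up C hx0
      (fun hne => Dmin_le C (X_subset_M hs y) hne) (le_Vmax C (X_subset_M hs y))
      (Dmin_le C (X_subset_M hs (σ y)) (ne_of_gt hy0)) htr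



/-! ## Terminal state assembly -/

lemma terminal (s : St C) (hs : Inv s) (hA : s.A = univ) (hP : s.P = ∅)
    (hsrc : ∃ k, ∀ i, i ≠ k → C.v i (s.X k) ≤ (1+2*C.δ) * C.v i (s.X i)) :
    ∃ F : Fin C.n → Finset G,
      (∀ i j, i ≠ j → Disjoint (F i) (F j)) ∧ (univ.biUnion F = C.M) ∧
      (∀ i, C.t ≤ C.v i (F i)) ∧
      (∀ i j, ∀ g ∈ F j, C.v i (F j \ {g}) ≤ (2+3*C.δ) * C.v i (F i)) := by
  classical
  obtain ⟨k, hk⟩ := hsrc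
  have hδ := C.hδ
  set F : Fin C.n → Finset G := Function.update s.X k (s.X k ∪ s.B) with hFdef
  have hmemA : ∀ i : Fin C.n, i ∈ s.A := fun i => by rw [hA]; exact Finset.mem_univ i
  have hFsup : ∀ i, s.X i ⊆ F i := by
    intro i
    rw [hFdef]
    by_cases hik : i = k
    · subst hik; rw [Function.update_self]; exact Finset.subset_union_left
    · rw [Function.update_of_ne hik]
  have hFM : ∀ i, F i ⊆ C.M := by
    intro i
    rw [hFdef]
    by_cases hik : i = k
    · subst hik
      rw [Function.update_self]
      intro g hg
      rcases Finset.mem_union.1 hg with hg | hg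
      · exact X_subset_M hs i hg
      · exact B_subset_M hs hg
    · rw [Function.update_of_ne hik]
      exact X_subset_M hs i
  have hvF : ∀ i, C.v i (s.X i) ≤ C.v i (F i) := fun i => C.hmono i _ _ (hFsup i)
  refine ⟨F, ?_, ?_, ?_, ?_⟩
  · intro i j hij
    rw [hFdef]
    by_cases hik : i = k
    · subst hik
      rw [Function.update_self, Function.update_of_ne (Ne.symm hij),
        Finset.disjoint_union_left]
      exact ⟨hs.jd i j hij, (hs.jxb j).symm⟩
    · rw [Function.update_of_ne hik]
      by_cases hjk : j = k
      · subst hjk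
        rw [Function.update_self, Finset.disjoint_union_right]
        exact ⟨hs.jd i j hij, hs.jxb i⟩
      · rw [Function.update_of_ne hjk]
        exact hs.jd i j hij
  · rw [← hs.jcov]
    ext g
    rw [mem_tot]
    simp only [Finset.mem_biUnion, Finset.mem_univ, true_and, hFdef, hP,
      Finset.notMem_empty, false_or]
    constructor
    · rintro ⟨i, hi⟩
      by_cases hik : i = k
      · subst hik
        rw [Function.update_self, Finset.mem_union] at hi
        rcases hi with hi | hi
        · exact Or.inl ⟨i, hi⟩
        · exact Or.inr hi
      · rw [Function.update_of_ne hik] at hi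
        exact Or.inl ⟨i, hi⟩
    · rintro (⟨i, hi⟩ | hgB)
      · exact ⟨i, (hFsup i) hi⟩
      · exact ⟨k, by rw [Function.update_self]; exact Finset.mem_union_right _ hgB⟩
  · intro i
    exact le_trans (hs.j2 i (hmemA i)) (hvF i)
  · intro i j g hg
    have hv0F := C.hv0 i (F i)
    by_cases hij : i = j
    · subst hij
      have := C.hmono i _ _ (Finset.sdiff_subset (s := F i) (t := {g}))
      nlinarith
    · by_cases hjk : j = k
      · subst hjk
        have hsub : F j \ {g} ⊆ s.X j ∪ s.B := by
          refine le_trans (Finset.sdiff_subset) ?_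
          rw [hFdef, Function.update_self]
        have h1 : C.v i (F j \ {g}) ≤ C.v i (s.X j) + C.v i s.B :=
          le_trans (C.hmono i _ _ hsub) (C.hsub i _ _)
        have h2 := hk i hij
        have h3 := hs.j6 i (hmemA i)
        have h4 := hvF i
        have h5 : F i = s.X i := by
          rw [hFdef, Function.update_of_ne hij]
        rw [h5]
        nlinarith [C.hv0 i (s.X i)]
      · have hFj : F j = s.X j := by rw [hFdef, Function.update_of_ne hjk]
        rcases hs.j3 i (hmemA i) j (hmemA j) hij with hcard | hle
        · -- singleton bundle
          obtain ⟨a, ha⟩ := Finset.card_eq_one.1 hcard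
          have hga : g = a := by
            rw [hFj, ha, Finset.mem_singleton] at hg
            exact hg
          have : F j \ {g} = ∅ := by
            rw [hFj, ha, hga]
            simp
          rw [this, C.hnorm]
          nlinarith
        · have h1 : C.v i (F j \ {g}) ≤ C.v i (s.X j) := by
            rw [hFj]
            exact C.hmono i _ _ (Finset.sdiff_subset)
          have h4 := hvF i
          nlinarith [C.hv0 i (s.X i), C.hv0 i (s.X j)]

/-! ## The main recursion -/

lemma build : ∀ (N : ℕ) (s : St C), Inv s → meas s < N →
    ∃ F : Fin C.n → Finset G,
      (∀ i j, i ≠ j → Disjoint (F i) (F j)) ∧ (univ.biUnion F = C.M) ∧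
      (∀ i, C.t ≤ C.v i (F i)) ∧
      (∀ i j, ∀ g ∈ F j, C.v i (F j \ {g}) ≤ (2+3*C.δ) * C.v i (F i)) := by
  intro N
  induction N with
  | zero => intro s _ h; omega
  | succ N ih =>
    intro s hs hm
    by_cases hpeel : ∃ u, u ∉ s.A ∧ ∃ h ∈ s.P, C.t ≤ C.v u {h}
    · by_cases hown : ∃ u, u ∉ s.A ∧ ∃ h ∈ s.P, (C.t ≤ C.v u {h} ∧ h ∈ C.Z u)
      · obtain ⟨u, hu, h, hh, hval, hZ⟩ := hown
        obtain ⟨s', hs', hlt⟩ := move_peel s hs u h hu hh hval (Or.inl hZ)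
        exact ih s' hs' (by omega)
      · obtain ⟨u, hu, h, hh, hval⟩ := hpeel
        have hOC : ∀ u', u' ∉ s.A → h ∈ C.Z u' → C.v u' {h} < C.t := by
          intro u' hu' hZ
          by_contra hcon
          push_neg at hcon
          exact hown ⟨u', hu', h, hh, hcon, hZ⟩
        obtain ⟨s', hs', hlt⟩ := move_peel s hs u h hu hh hval (Or.inr hOC)
        exact ih s' hs' (by omega)
    · push_neg at hpeel
      by_cases hPne : s.P.Nonempty
      · obtain ⟨h, hh⟩ := hPne
        have hNPP : ∀ u, u ∉ s.A → C.v u {h} < C.t := fun u hu => hpeel u hu h hh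
        by_cases hss : ∃ j ∈ s.A, (1+C.δ) * C.v j (s.X j) < C.v j {h}
        · obtain ⟨j, hj, htrig⟩ := hss
          obtain ⟨s', hs', hlt⟩ := move_sswap s hs j h hj hh hNPP htrig
          exact ih s' hs' (by omega)
        · push_neg at hss
          by_cases hbs : ∃ j ∈ s.A, (1+C.δ) * C.v j (s.X j) < C.v j (s.B ∪ {h})
          · obtain ⟨j, hj, htrig⟩ := hbs
            obtain ⟨s', hs', hlt⟩ := move_bswap s hs j h hj hh hNPP hss htrig
            exact ih s' hs' (by omega)
          · push_neg at hbs
            by_cases has : ∃ u, u ∉ s.A ∧ C.t ≤ C.v u (s.B ∪ {h})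
            · obtain ⟨u, hu, htrig⟩ := has
              obtain ⟨s', hs', hlt⟩ := move_assign s hs u h hu hh hNPP hbs htrig
              exact ih s' hs' (by omega)
            · push_neg at has
              obtain ⟨s', hs', hlt⟩ := move_add s hs h hh hbs has
              exact ih s' hs' (by omega)
      · have hP : s.P = ∅ := Finset.not_nonempty_iff_eq_empty.1 hPne
        by_cases hAu : s.A = univ
        · by_cases hsrc : ∃ k, ∀ i, i ≠ k → C.v i (s.X k) ≤ (1+2*C.δ) * C.v i (s.X i)
          · exact terminal s hs hAu hP hsrc
          · push_neg at hsrc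
            obtain ⟨s', hs', hlt⟩ := move_rotate s hs hAu hsrc
            exact ih s' hs' (by omega)
        · have : ∃ u, u ∉ s.A := by
            by_contra hcon
            push_neg at hcon
            exact hAu (Finset.eq_univ_iff_forall.2 hcon)
          obtain ⟨u, hu⟩ := this
          obtain ⟨s', hs', hlt⟩ := move_force s hs u hu hP
          exact ih s' hs' (by omega)

/-- The core theorem -/
lemma core :
    ∃ F : Fin C.n → Finset G,
      (∀ i j, i ≠ j → Disjoint (F i) (F j)) ∧ (univ.biUnion F = C.M) ∧
      (∀ i, C.t ≤ C.v i (F i)) ∧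
      (∀ i j, ∀ g ∈ F j, C.v i (F j \ {g}) ≤ (2+3*C.δ) * C.v i (F i)) := by
  classical
  set s₀ : St C := ⟨∅, fun _ => ∅, C.M, ∅⟩ with hs₀
  have hinv : Inv s₀ := by
    constructor
    · intro i _; rfl
    · intro i j _; exact Finset.disjoint_empty_left _
    · intro i; exact Finset.disjoint_empty_left _
    · intro i; exact Finset.disjoint_empty_left _
    · exact Finset.disjoint_empty_right _
    · rw [hs₀]
      unfold tot
      simp
    · intro i hi; exact absurd hi (Finset.notMem_empty i)
    · intro i hi; exact absurd hi (Finset.notMem_empty i)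
    · intro u _ k hk; exact absurd hk (Finset.notMem_empty k)
    · intro u _ k hk; exact absurd hk (Finset.notMem_empty k)
    · intro j hj; exact absurd hj (Finset.notMem_empty j)
    · intro u _; left; rfl
  exact build (meas s₀ + 1) s₀ hinv (Nat.lt_succ_self _)



end EFXProof

set_option maxHeartbeats 1000000 in
theorem main_complete_egalitarian
    {G : Type*} [DecidableEq G]
    (n : ℕ) (hn : 0 < n) (M : Finset G) (hm : n ≤ M.card)
    (v : Fin n → Finset G → ℝ)
    (hv0 : ∀ i A, 0 ≤ v i A)
    (hnorm : ∀ i, v i ∅ = 0)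
    (hmono : ∀ i A B, A ⊆ B → v i A ≤ v i B)
    (hsub : ∀ i A B, v i (A ∪ B) ≤ v i A + v i B)
    (ε : ℝ) (hε0 : 0 < ε) (hε1 : ε < 1 / 2) :
    ∃ X : Fin n → Finset G,
      (∀ i, X i ⊆ M) ∧
      (∀ i j, i ≠ j → Disjoint (X i) (X j)) ∧
      (Finset.univ.biUnion X = M) ∧
      (∀ i j, ∀ g ∈ X j, (1 / 2 - ε) * v i (X j \ {g}) ≤ v i (X i)) ∧
      (∀ Xs : Fin n → Finset G, (∀ i, Xs i ⊆ M) →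
        (∀ i j, i ≠ j → Disjoint (Xs i) (Xs j)) →
        ((1 - 2 * ε) / (8 * ((n : ℝ) + 1))) *
            Finset.univ.inf' ⟨⟨0, hn⟩, Finset.mem_univ _⟩ (fun i => v i (Xs i))
          ≤ Finset.univ.inf' ⟨⟨0, hn⟩, Finset.mem_univ _⟩ (fun i => v i (X i))) := by
  classical
  have h2ε : (0:ℝ) < 1 - 2*ε := by linarith
  set β : ℝ := 1/2 - ε with hβdef
  have hβ0 : 0 < β := by rw [hβdef]; linarith
  set δ : ℝ := ε / (1 - 2*ε) with hδdef
  have hδ0 : 0 < δ := by rw [hδdef]; positivity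
  -- colorings of M and the optimal benchmark
  set fiber : ({x // x ∈ M} → Fin n) → Fin n → Finset G :=
    fun κ i => (M.attach.filter (fun g => κ g = i)).image Subtype.val with hfiberdef
  have hfibM : ∀ κ i, fiber κ i ⊆ M := by
    intro κ i g hg
    rw [hfiberdef] at hg
    obtain ⟨a, _, rfl⟩ := Finset.mem_image.1 hg
    exact a.2
  have hfibdisj : ∀ κ i j, i ≠ j → Disjoint (fiber κ i) (fiber κ j) := by
    intro κ i j hij
    rw [Finset.disjoint_left]
    intro g hgi hgj
    rw [hfiberdef] at hgi hgj
    obtain ⟨a, ha, rfl⟩ := Finset.mem_image.1 hgi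
    obtain ⟨b, hb, hba⟩ := Finset.mem_image.1 hgj
    have : b = a := Subtype.ext hba
    subst this
    rw [Finset.mem_filter] at ha hb
    exact hij (ha.2 ▸ hb.2 ▸ rfl)
  set mval : ({x // x ∈ M} → Fin n) → ℝ :=
    fun κ => Finset.univ.inf' ⟨⟨0, hn⟩, Finset.mem_univ _⟩ (fun i => v i (fiber κ i))
    with hmvaldef
  haveI : Nonempty ({x // x ∈ M} → Fin n) := ⟨fun _ => ⟨0, hn⟩⟩
  obtain ⟨κs, _, hκs⟩ := Finset.exists_max_image (Finset.univ : Finset ({x // x ∈ M} → Fin n))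
    mval Finset.univ_nonempty
  set μ : ℝ := mval κs with hμdef
  have hμ0 : 0 ≤ μ := by
    rw [hμdef, hmvaldef]
    apply Finset.le_inf'
    intro i _
    exact hv0 i _
  have hμle : ∀ i, μ ≤ v i (fiber κs i) := by
    intro i
    rw [hμdef, hmvaldef]
    exact Finset.inf'_le _ (Finset.mem_univ i)
  set t : ℝ := β * μ / (2*((n:ℝ)+1)) with htdef
  have ht0 : 0 ≤ t := by
    rw [htdef]
    have hn1 : (0:ℝ) < 2*((n:ℝ)+1) := by positivity
    positivity
  -- the context
  set C : EFXProof.Ctx G :=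
    { n := n, hn := hn, M := M, v := v, hv0 := hv0, hnorm := hnorm, hmono := hmono,
      hsub := hsub, δ := δ, hδ := hδ0, t := t, ht0 := ht0, Z := fiber κs,
      hZM := hfibM κs, hZdisj := hfibdisj κs,
      hZval := by
        intro i
        have h1 := hμle i
        have hnn : (0:ℝ) < (n:ℝ) + 1 := by positivity
        have hkey : (2*(n:ℝ)+1) * t ≤ μ := by
          rw [htdef]
          have hrw : (2*(n:ℝ)+1) * (β * μ / (2*((n:ℝ)+1))) =
              ((2*(n:ℝ)+1) * β * μ) / (2*((n:ℝ)+1)) := by ring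
          rw [hrw, div_le_iff₀ (by positivity)]
          have hβhalf : β ≤ 1/2 := by rw [hβdef]; linarith
          have hcast : (0:ℝ) ≤ (n:ℝ) := Nat.cast_nonneg n
          have h3 : (2*(n:ℝ)+1) * β ≤ (n:ℝ)+1 := by
            rw [hβdef]
            nlinarith [mul_nonneg hcast (le_of_lt hε0)]
          nlinarith [mul_le_mul_of_nonneg_right h3 hμ0]
        linarith } with hCdef
  obtain ⟨F, hFdisj, hFcov, hFfloor, hFefx⟩ := EFXProof.core (C := C)
  have hCv : C.v = v := rfl
  have hCn : C.n = n := rfl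
  refine ⟨F, ?_, ?_, ?_, ?_, ?_⟩
  · intro i
    intro g hg
    have h' : g ∈ Finset.univ.biUnion F :=
      Finset.mem_biUnion.2 ⟨i, Finset.mem_univ _, hg⟩
    rw [hFcov] at h'
    exact h'
  · exact hFdisj
  · exact hFcov
  · -- EFX
    intro i j g hg
    have h1 := hFefx i j g hg
    have hβδ : β * (2 + 3*δ) ≤ 1 := by
      rw [hβdef, hδdef]
      have hδval : (1/2 - ε) * (ε / (1 - 2*ε)) = ε/2 := by
        field_simp
      have hexpand : (1/2 - ε) * (2 + 3 * (ε / (1 - 2*ε))) =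
          2*(1/2-ε) + 3*((1/2 - ε) * (ε / (1 - 2*ε))) := by ring
      rw [hexpand, hδval]
      linarith
    have hv0F := hv0 i (F i)
    have hv0j := hv0 i (F j \ {g})
    calc (1/2 - ε) * v i (F j \ {g}) = β * v i (F j \ {g}) := by rw [hβdef]
      _ ≤ β * ((2 + 3*δ) * v i (F i)) := by
          apply mul_le_mul_of_nonneg_left _ (le_of_lt hβ0)
          exact h1
      _ = (β * (2 + 3*δ)) * v i (F i) := by ring
      _ ≤ 1 * v i (F i) := mul_le_mul_of_nonneg_right hβδ hv0F
      _ = v i (F i) := one_mul _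
  · -- egalitarian welfare
    intro Xs hXsM hXsdisj
    have hinfF : t ≤ Finset.univ.inf' ⟨⟨0, hn⟩, Finset.mem_univ _⟩ (fun i => v i (F i)) := by
      apply Finset.le_inf'
      intro i _
      exact hFfloor i
    -- inf'(Xs) ≤ μ via the induced coloring
    set κX : {x // x ∈ M} → Fin n := fun g =>
      if h : ∃ i, (g : G) ∈ Xs i then Classical.choose h else ⟨0, hn⟩ with hκXdef
    have hXsub : ∀ i, Xs i ⊆ fiber κX i := by
      intro i g hg
      have hgM : g ∈ M := hXsM i hg
      rw [hfiberdef]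
      apply Finset.mem_image.2
      refine ⟨⟨g, hgM⟩, ?_, rfl⟩
      rw [Finset.mem_filter]
      refine ⟨Finset.mem_attach _ _, ?_⟩
      rw [hκXdef]
      have hex : ∃ j, g ∈ Xs j := ⟨i, hg⟩
      simp only [dif_pos hex]
      by_contra hne
      have hch := Classical.choose_spec hex
      exact (Finset.disjoint_left.1 (hXsdisj _ i hne) hch) hg
    have hXsμ : Finset.univ.inf' ⟨⟨0, hn⟩, Finset.mem_univ _⟩ (fun i => v i (Xs i)) ≤ μ := by
      calc Finset.univ.inf' ⟨⟨0, hn⟩, Finset.mem_univ _⟩ (fun i => v i (Xs i))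
          ≤ mval κX := by
            rw [hmvaldef]
            apply Finset.le_inf'
            intro i _
            exact le_trans (Finset.inf'_le _ (Finset.mem_univ i))
              (hmono i _ _ (hXsub i))
        _ ≤ μ := hκs κX (Finset.mem_univ _)
    have hc0 : 0 ≤ (1 - 2*ε) / (8 * ((n:ℝ) + 1)) := by positivity
    have hcμt : (1 - 2*ε) / (8 * ((n:ℝ) + 1)) * μ ≤ t := by
      rw [htdef, hβdef]
      have hrw1 : (1 - 2*ε) / (8*((n:ℝ)+1)) * μ = ((1-2*ε)*μ) / (8*((n:ℝ)+1)) := by ring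
      have hrw2 : (1/2 - ε) * μ / (2*((n:ℝ)+1)) = ((1/2-ε)*μ) / (2*((n:ℝ)+1)) := by ring
      rw [hrw1, hrw2, div_le_div_iff₀ (by positivity) (by positivity)]
      have hfact : (0:ℝ) ≤ (1 - 2*ε) * μ * ((n:ℝ)+1) :=
        mul_nonneg (mul_nonneg (le_of_lt h2ε) hμ0) (by positivity)
      nlinarith
    calc (1 - 2*ε) / (8 * ((n:ℝ) + 1)) *
          Finset.univ.inf' ⟨⟨0, hn⟩, Finset.mem_univ _⟩ (fun i => v i (Xs i))
        ≤ (1 - 2*ε) / (8 * ((n:ℝ) + 1)) * μ := mul_le_mul_of_nonneg_left hXsμ hc0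
      _ ≤ t := hcμt
      _ ≤ _ := hinfF
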